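/- For F = [[0,1],[-1,-2]], the limit as t → 0⁺ of det(I - exp(Ft))² / det(I - exp(Ft)·exp(Ft)ᵀ) equals 3/4. -/

import Mathlib

open NormedSpace Matrix Filter

lemma exp_sq_zero {x : Matrix (Fin 2) (Fin 2) ℝ} (h : x ^ 2 = 0) :
    exp x = 1 + x := by
  rw [exp_eq_tsum ℝ]
  show (∑' n : ℕ, (Nat.factorial n : ℝ)⁻¹ • x ^ n) = 1 + x
  rw [tsum_eq_sum (s := Finset.range 2) ?_]
  · simp [Finset.sum_range_succ]
  · intro n hn
    have h2 : 2 ≤ n := by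
      have : ¬ n < 2 := by simpa using hn
      omega
    have : x ^ n = 0 := by
      calc x ^ n = x ^ 2 * x ^ (n - 2) := by rw [← pow_add]; congr 1; omega
      _ = 0 := by rw [h, zero_mul]
    simp [this]

lemma exp_explicit (t : ℝ) :
    exp (t • (!![0, 1; -1, -2] : Matrix (Fin 2) (Fin 2) ℝ)) =
      Real.exp (-t) • !![1 + t, t; -t, 1 - t] := by
  have hsplit : t • (!![0, 1; -1, -2] : Matrix (Fin 2) (Fin 2) ℝ)
      = (-t) • (1 : Matrix (Fin 2) (Fin 2) ℝ) + t • (!![1, 1; -1, -1] : Matrix (Fin 2) (Fin 2) ℝ) := by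
    ext i j; fin_cases i <;> fin_cases j <;> simp [Matrix.one_apply] <;> ring
  have hcomm : Commute ((-t) • (1 : Matrix (Fin 2) (Fin 2) ℝ)) (t • (!![1, 1; -1, -1] : Matrix (Fin 2) (Fin 2) ℝ)) :=
    (Commute.one_left _).smul_left _ |>.smul_right _
  have hnil : (t • (!![1, 1; -1, -1] : Matrix (Fin 2) (Fin 2) ℝ)) ^ 2 = 0 := by
    rw [smul_pow]
    have : (!![1, 1; -1, -1] : Matrix (Fin 2) (Fin 2) ℝ) ^ 2 = 0 := by
      rw [pow_two]
      ext i j; fin_cases i <;> fin_cases j <;> simp [Matrix.mul_apply, Fin.sum_univ_two]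
    rw [this, smul_zero]
  have h1 : exp ((-t) • (1 : Matrix (Fin 2) (Fin 2) ℝ)) = Real.exp (-t) • 1 := by
    have hd : ((-t) • (1 : Matrix (Fin 2) (Fin 2) ℝ)) = diagonal (fun _ => -t) := by
      ext i j; rcases eq_or_ne i j with hij | hij <;> simp [Matrix.one_apply, diagonal, hij]
    rw [hd, Matrix.exp_diagonal]
    ext i j
    simp only [diagonal, Matrix.smul_apply, Matrix.one_apply, of_apply]
    split <;> simp [← Real.exp_eq_exp_ℝ]
  rw [hsplit, Matrix.exp_add_of_commute _ _ hcomm, h1, exp_sq_zero hnil]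
  ext i j; fin_cases i <;> fin_cases j <;>
    simp [Matrix.one_apply, Matrix.mul_apply, Fin.sum_univ_two] <;> ring

open Set

-- derivative helper
lemma he (x : ℝ) : HasDerivAt (fun t : ℝ => Real.exp (-t)) (-Real.exp (-x)) x := by
  simpa using (hasDerivAt_neg x).exp

lemma ha : Tendsto (fun t : ℝ => (1 - Real.exp (-t)) / t) (nhdsWithin 0 (Ioi 0)) (nhds 1) := by
  have hf : HasDerivAt (fun t : ℝ => 1 - Real.exp (-t)) 1 0 := by
    simpa using (he 0).const_sub 1
  have := hasDerivAt_iff_tendsto_slope.mp hf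
  have h2 := this.mono_left (nhdsWithin_mono 0 (fun x hx => ne_of_gt hx))
  refine h2.congr (fun t => ?_)
  simp [slope_def_field]

lemma hc : Tendsto (fun t : ℝ => (1 - Real.exp (-t) ^ 2 + 2 * t * Real.exp (-t)) / t)
    (nhdsWithin 0 (Ioi 0)) (nhds 4) := by
  have hf : HasDerivAt (fun t : ℝ => 1 - Real.exp (-t) ^ 2 + 2 * t * Real.exp (-t)) 4 0 := by
    have h1 := ((he 0).pow 2).const_sub 1
    have h2 := (((hasDerivAt_id (0:ℝ)).const_mul 2).mul (he 0))
    have := h1.add h2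
    refine this.congr_deriv ?_
    simp [Real.exp_zero]; ring
  have := hasDerivAt_iff_tendsto_slope.mp hf
  have h2 := this.mono_left (nhdsWithin_mono 0 (fun x hx => ne_of_gt hx))
  refine h2.congr (fun t => ?_)
  simp [slope_def_field, Real.exp_zero]

lemma hb : Tendsto (fun t : ℝ => (1 - Real.exp (-t) ^ 2 - 2 * t * Real.exp (-t)) / t ^ 3)
    (nhdsWithin 0 (Ioi 0)) (nhds (1/3)) := by
  set e : ℝ → ℝ := fun t => Real.exp (-t) with he_def
  -- derivatives
  have d0 : ∀ x : ℝ, HasDerivAt (fun t => 1 - e t ^ 2 - 2 * t * e t)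
      (2 * e x ^ 2 - 2 * e x + 2 * x * e x) x := by
    intro x
    have h1 := ((he x).pow 2).const_sub 1
    have h2 := (((hasDerivAt_id x).const_mul 2).mul (he x))
    have := h1.sub h2
    refine this.congr_deriv ?_; simp only [id]; ring
  have d1 : ∀ x : ℝ, HasDerivAt (fun t => 2 * e t ^ 2 - 2 * e t + 2 * t * e t)
      (-4 * e x ^ 2 + 4 * e x - 2 * x * e x) x := by
    intro x
    have h1 := (((he x).pow 2).const_mul 2).sub ((he x).const_mul 2)
    have h2 := (((hasDerivAt_id x).const_mul 2).mul (he x))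
    have := h1.add h2
    refine this.congr_deriv ?_; simp only [id]; ring
  have d2 : ∀ x : ℝ, HasDerivAt (fun t => -4 * e t ^ 2 + 4 * e t - 2 * t * e t)
      (8 * e x ^ 2 - 4 * e x - 2 * e x + 2 * x * e x) x := by
    intro x
    have h1 := (((he x).pow 2).const_mul (-4)).add ((he x).const_mul 4)
    have h2 := (((hasDerivAt_id x).const_mul 2).mul (he x))
    have := h1.sub h2
    refine this.congr_deriv ?_; simp only [id]; ring
  have econt : Continuous e := by fun_prop
  -- level 2 : (-4 e² + 4 e - 2 t e)/(6 t) → 1/3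
  have lim2 : Tendsto (fun t => (-4 * e t ^ 2 + 4 * e t - 2 * t * e t) / (6 * t))
      (nhdsWithin 0 (Ioi 0)) (nhds (1/3)) := by
    have hf : HasDerivAt (fun t => -4 * e t ^ 2 + 4 * e t - 2 * t * e t) 2 0 := by
      have := d2 0
      convert this using 1
      simp [he_def, Real.exp_zero]; ring
    have hs := (hasDerivAt_iff_tendsto_slope.mp hf).mono_left
      (nhdsWithin_mono 0 (fun x hx => ne_of_gt hx))
    have : Tendsto (fun t => (-4 * e t ^ 2 + 4 * e t - 2 * t * e t) / t)
        (nhdsWithin 0 (Ioi 0)) (nhds 2) := by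
      refine hs.congr (fun t => ?_)
      simp [slope_def_field, he_def, Real.exp_zero]
    have h6 := this.div_const 6
    have h13 : (2:ℝ)/6 = 1/3 := by norm_num
    rw [h13] at h6
    refine h6.congr (fun t => ?_)
    rw [div_div, mul_comm t 6]
  -- now two L'Hopital applications
  have mem_pos : ∀ᶠ t : ℝ in nhdsWithin 0 (Ioi 0), (0:ℝ) < t :=
    eventually_mem_nhdsWithin
  have tendsto_zero : ∀ {f : ℝ → ℝ}, Continuous f → f 0 = 0 →
      Tendsto f (nhdsWithin 0 (Ioi 0)) (nhds 0) := by
    intro f hf h0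
    have := (hf.tendsto 0).mono_left (nhdsWithin_le_nhds (s := Ioi (0:ℝ)))
    rwa [h0] at this
  -- level 1
  have lim1 : Tendsto (fun t => (2 * e t ^ 2 - 2 * e t + 2 * t * e t) / (3 * t ^ 2))
      (nhdsWithin 0 (Ioi 0)) (nhds (1/3)) := by
    apply HasDerivAt.lhopital_zero_nhdsGT
      (f' := fun x => -4 * e x ^ 2 + 4 * e x - 2 * x * e x) (g' := fun x => 6 * x)
    · exact Eventually.of_forall d1
    · exact Eventually.of_forall (fun x => by
        have := (hasDerivAt_pow 2 x).const_mul 3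
        refine this.congr_deriv ?_; ring)
    · exact mem_pos.mono (fun t ht => by positivity)
    · exact tendsto_zero (by fun_prop) (by simp [he_def])
    · exact tendsto_zero (by fun_prop) (by simp)
    · exact lim2
  apply HasDerivAt.lhopital_zero_nhdsGT
    (f' := fun x => 2 * e x ^ 2 - 2 * e x + 2 * x * e x) (g' := fun x => 3 * x ^ 2)
  · exact Eventually.of_forall d0
  · exact Eventually.of_forall (fun x => by
      simpa using (hasDerivAt_pow 3 x))
  · exact mem_pos.mono (fun t ht => by positivity)
  · exact tendsto_zero (by fun_prop) (by simp [he_def])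
  · exact tendsto_zero (by fun_prop) (by simp)
  · exact lim1

/-- For `F = [[0,1],[-1,-2]]`, the ratio `det(I - exp(Ft))² / det(I - exp(Ft) exp(Ft)ᵀ)`
tends to `3/4` as `t → 0⁺`. -/
theorem det_ratio_limit_hold2 :
    Tendsto
      (fun t : ℝ =>
        (Matrix.det ((1 : Matrix (Fin 2) (Fin 2) ℝ) -
            exp (t • (!![0, 1; -1, -2] : Matrix (Fin 2) (Fin 2) ℝ)))) ^ 2 /
          Matrix.det ((1 : Matrix (Fin 2) (Fin 2) ℝ) -
            exp (t • (!![0, 1; -1, -2] : Matrix (Fin 2) (Fin 2) ℝ)) *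
              (exp (t • (!![0, 1; -1, -2] : Matrix (Fin 2) (Fin 2) ℝ)))ᵀ))
      (nhdsWithin 0 (Set.Ioi 0)) (nhds (3 / 4)) := by
  set g : ℝ → ℝ := fun t =>
    ((1 - Real.exp (-t)) / t) ^ 4 /
      (((1 - Real.exp (-t) ^ 2 - 2 * t * Real.exp (-t)) / t ^ 3) *
        ((1 - Real.exp (-t) ^ 2 + 2 * t * Real.exp (-t)) / t)) with hg_def
  have hgt : Tendsto g (nhdsWithin 0 (Set.Ioi 0)) (nhds (3/4)) := by
    have H := (ha.pow 4).div (hb.mul hc) (by norm_num : (1/3 : ℝ) * 4 ≠ 0)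
    have : (1:ℝ)^4 / ((1/3) * 4) = 3/4 := by norm_num
    rwa [this] at H
  refine Tendsto.congr' ?_ hgt
  filter_upwards [eventually_mem_nhdsWithin] with t (ht : (0:ℝ) < t)
  have ht' : t ≠ 0 := ne_of_gt ht
  simp only [hg_def, exp_explicit t]
  set u := Real.exp (-t) with hu
  have hdet1 : Matrix.det ((1 : Matrix (Fin 2) (Fin 2) ℝ) - u • !![1 + t, t; -t, 1 - t])
      = (1 - u) ^ 2 := by
    rw [Matrix.det_fin_two]
    simp [Matrix.one_apply]
    ring
  have hdet2 : Matrix.det ((1 : Matrix (Fin 2) (Fin 2) ℝ) -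
      u • !![1 + t, t; -t, 1 - t] * (u • !![1 + t, t; -t, 1 - t])ᵀ)
      = (1 - u ^ 2) ^ 2 - 4 * t ^ 2 * u ^ 2 := by
    rw [Matrix.det_fin_two]
    simp [Matrix.one_apply, Matrix.mul_apply, Fin.sum_univ_two, Matrix.vecHead, Matrix.vecTail, Matrix.vecMul, dotProduct]
    ring
  rw [hdet1, hdet2]
  have e1 : ((1 - u) / t) ^ 4 = (1 - u) ^ 4 / t ^ 4 := div_pow _ _ _
  have e2 : ((1 - u ^ 2 - 2 * t * u) / t ^ 3) * ((1 - u ^ 2 + 2 * t * u) / t)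
      = ((1 - u ^ 2) ^ 2 - 4 * t ^ 2 * u ^ 2) / t ^ 4 := by
    rw [div_mul_div_comm]
    congr 1 <;> ring
  have e3 : ((1 - u) ^ 2) ^ 2 = (1 - u) ^ 4 := by ring
  rw [e1, e2, e3]
  rcases eq_or_ne ((1 - u ^ 2) ^ 2 - 4 * t ^ 2 * u ^ 2) 0 with hD | hD
  · simp [hD]
  · field_simp
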